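/- Touching lemma: Let L be convolution with an even, positive, integrable kernel normalized so Lc = c for constants, and suppose φ₁ is a bounded continuous supersolution and φ₂ a bounded continuous subsolution of −μφ + Lφ + φ² = 0 with φ₁ ≥ φ₂ pointwise. Then either φ₁ ≡ φ₂, or φ₁(x) > φ₂(x) and φ₁(x) + φ₂(x) < μ for every x ∈ ℝ. -/

import Mathlib

open MeasureTheory

theorem touching_lemma (K : ℝ → ℝ) (μ : ℝ)
    (hKe : ∀ x, K (-x) = K x) (hKpos : ∀ x, 0 < K x)
    (hKint : MeasureTheory.Integrable K) (hK1 : (∫ x, K x) = 1)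
    (φ₁ φ₂ : ℝ → ℝ)
    (hc1 : Continuous φ₁) (hb1 : ∃ M, ∀ x, |φ₁ x| ≤ M)
    (hc2 : Continuous φ₂) (hb2 : ∃ M, ∀ x, |φ₂ x| ≤ M)
    (hsuper : ∀ x, -μ * φ₁ x + (∫ y, K (x-y) * φ₁ y) + φ₁ x ^ 2 ≤ 0)
    (hsub : ∀ x, 0 ≤ -μ * φ₂ x + (∫ y, K (x-y) * φ₂ y) + φ₂ x ^ 2)
    (h12 : ∀ x, φ₂ x ≤ φ₁ x) :
    (∀ x, φ₁ x = φ₂ x) ∨ (∀ x, φ₂ x < φ₁ x ∧ φ₁ x + φ₂ x < μ) := by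
  by_cases hw : ∀ x, φ₁ x = φ₂ x
  · exact Or.inl hw
  right
  push_neg at hw
  obtain ⟨x₀, hx₀⟩ := hw
  obtain ⟨M1, hM1⟩ := hb1
  obtain ⟨M2, hM2⟩ := hb2
  intro x
  have hKx : Integrable (fun y => K (x - y)) := hKint.comp_sub_left x
  have hi1 : Integrable (fun y => K (x - y) * φ₁ y) := by
    have := hKx.bdd_mul hc1.aestronglyMeasurable
      (c := M1) (Filter.Eventually.of_forall fun y => by simpa [Real.norm_eq_abs] using hM1 y)
    simpa [mul_comm] using this
  have hi2 : Integrable (fun y => K (x - y) * φ₂ y) := by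
    have := hKx.bdd_mul hc2.aestronglyMeasurable
      (c := M2) (Filter.Eventually.of_forall fun y => by simpa [Real.norm_eq_abs] using hM2 y)
    simpa [mul_comm] using this
  have hiw : Integrable (fun y => K (x - y) * (φ₁ y - φ₂ y)) := by
    simpa [mul_sub] using (hi1.sub hi2 : Integrable (fun y => K (x - y) * φ₁ y - K (x - y) * φ₂ y))
  have hLw : 0 < ∫ y, K (x - y) * (φ₁ y - φ₂ y) := by
    rw [integral_pos_iff_support_of_nonneg
      (fun y => mul_nonneg (hKpos _).le (sub_nonneg.mpr (h12 y))) hiw]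
    have hsup : Function.support (fun y => K (x - y) * (φ₁ y - φ₂ y))
        = {y | φ₁ y - φ₂ y ≠ 0} := by
      ext y
      simp [Function.support, mul_eq_zero, (hKpos (x - y)).ne', sub_eq_zero]
    rw [hsup]
    have hopen : IsOpen {y | φ₁ y - φ₂ y ≠ 0} :=
      isOpen_ne_fun (hc1.sub hc2) continuous_const
    exact hopen.measure_pos volume ⟨x₀, by simp [sub_eq_zero, hx₀]⟩
  have hsplit : (∫ y, K (x - y) * (φ₁ y - φ₂ y))
      = (∫ y, K (x - y) * φ₁ y) - ∫ y, K (x - y) * φ₂ y := by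
    rw [← integral_sub hi1 hi2]
    congr 1; ext y; ring
  have key : (∫ y, K (x - y) * (φ₁ y - φ₂ y))
      ≤ (μ - φ₁ x - φ₂ x) * (φ₁ x - φ₂ x) := by
    have h1 := hsuper x
    have h2 := hsub x
    rw [hsplit]; nlinarith
  have hb : 0 ≤ φ₁ x - φ₂ x := sub_nonneg.mpr (h12 x)
  have hpos : 0 < (μ - φ₁ x - φ₂ x) * (φ₁ x - φ₂ x) := lt_of_lt_of_le hLw key
  have h1 : φ₂ x < φ₁ x := by
    by_contra h
    push_neg at h
    have hz : φ₁ x - φ₂ x = 0 := by linarith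
    rw [hz, mul_zero] at hpos
    exact lt_irrefl _ hpos
  exact ⟨h1, by nlinarith⟩
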